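/- Let A be an abelian category with enough projectives and FC₊(A) the category of filtered bounded-below chain complexes (X, W) with W an increasing, bounded-below, biregular filtration. Then for every object (X, W) of FC₊(A) there exists a filtered quasi-isomorphism ε : P → X where (P, W) is a filtered complex such that each graded piece Gr^W_p P is projective in every degree. -/

import Mathlib

open CategoryTheory CategoryTheory.Limits

universe v u

variable (A : Type u) [Category.{v} A] [Abelian A]

/-- A filtered bounded-below chain complex `(X, W)`: a bounded-below chain complex `X`
(modelled as an `ℕ`-indexed chain complex) together with an increasing filtration by
subcomplexes `W p ⟶ X`, which is bounded below (`W p = 0` for `p ≪ 0`) and biregular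
(in each degree `n`, `W p` exhausts `X` in degree `n` for `p ≫ 0`). -/
structure FilteredComplex where
  X : ChainComplex A ℕ
  W : ℤ → ChainComplex A ℕ
  ι : ∀ p : ℤ, W p ⟶ W (p + 1)
  mono_ι : ∀ p : ℤ, Mono (ι p)
  toX : ∀ p : ℤ, W p ⟶ X
  mono_toX : ∀ p : ℤ, Mono (toX p)
  compat : ∀ p : ℤ, ι p ≫ toX (p + 1) = toX p
  bounded_below : ∃ p₀ : ℤ, ∀ p ≤ p₀, ∀ n : ℕ, IsZero ((W p).X n)
  biregular : ∀ n : ℕ, ∃ p : ℤ, IsIso ((toX p).f n)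

variable {A}

/-- A filtered morphism between filtered complexes: a chain map together with compatible
maps on each filtration step. -/
structure FilteredHom (P Q : FilteredComplex A) where
  f : P.X ⟶ Q.X
  lift : ∀ p : ℤ, P.W p ⟶ Q.W p
  comm_toX : ∀ p : ℤ, lift p ≫ Q.toX p = P.toX p ≫ f
  comm_ι : ∀ p : ℤ, lift p ≫ Q.ι p = P.ι p ≫ lift (p + 1)

/-- A filtered morphism is a filtered quasi-isomorphism if `W_p(f)` is a
quasi-isomorphism for each `p`. -/
def FilteredHom.IsFilteredQuasiIso {P Q : FilteredComplex A} (φ : FilteredHom P Q) : Prop :=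
  ∀ p : ℤ, QuasiIso (φ.lift p)

/-- The graded piece `Gr^W_p` in degree `n`: the cokernel of the inclusion
`W_{p-1} ⟶ W_p` in degree `n`. -/
noncomputable def FilteredComplex.gr (P : FilteredComplex A) (p : ℤ) (n : ℕ) : A :=
  cokernel ((P.ι (p - 1)).f n)

namespace FPM
open CategoryTheory.Abelian CategoryTheory.Abelian.Pseudoelement ZeroObject
set_option linter.unusedSectionVars false
set_option maxHeartbeats 1000000

section Helpers
variable {C : Type*} [Category C] [Abelian C]

lemma isZero_of_mono {X Y : C} (f : X ⟶ Y) [Mono f] (h : IsZero Y) : IsZero X := by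
  rw [IsZero.iff_id_eq_zero, ← cancel_mono f]
  apply h.eq_of_tgt

lemma epi_of_isZero_tgt {X Y : C} (f : X ⟶ Y) (h : IsZero Y) : Epi f :=
  ⟨fun g h' _ => h.eq_of_src g h'⟩

lemma mono_of_isZero_src {X Y : C} (f : X ⟶ Y) (h : IsZero X) : Mono f :=
  ⟨fun g h' _ => (isZero_of_mono (𝟙 X) h).eq_of_tgt g h'⟩

lemma mono_of_isZero_src' {X Y : C} (f : X ⟶ Y) (h : IsZero X) : Mono f :=
  ⟨fun g h' _ => by
    apply (isZero_of_mono (𝟙 X) h).eq_of_tgt⟩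

lemma isZero_cokernel_of_epi {X Y : C} (f : X ⟶ Y) [Epi f] : IsZero (cokernel f) := by
  rw [IsZero.iff_id_eq_zero, ← cancel_epi (cokernel.π f), ← cancel_epi f]
  simp

lemma projective_of_isZero {X : C} (h : IsZero X) : Projective X :=
  ⟨fun f e _ => ⟨0, by rw [← cancel_epi (𝟙 X)]; apply (isZero_of_mono (𝟙 X) h).eq_of_src⟩⟩

lemma isZero_pullback {X Y Z : C} (f : X ⟶ Z) (g : Y ⟶ Z) (hX : IsZero X) (hY : IsZero Y) :
    IsZero (pullback f g) := by
  rw [IsZero.iff_id_eq_zero]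
  apply pullback.hom_ext
  · apply hX.eq_of_tgt
  · apply hY.eq_of_tgt

lemma isIso_of_isZero {X Y : C} (f : X ⟶ Y) (hX : IsZero X) (hY : IsZero Y) : IsIso f :=
  ⟨0, hX.eq_of_src _ _, hY.eq_of_src _ _⟩

lemma isIso_kernel_map {X Y X' Y' : C} (f : X ⟶ Y) (f' : X' ⟶ Y') (p : X ⟶ X') (q : Y ⟶ Y')
    (w : f ≫ q = p ≫ f') [IsIso p] [IsIso q] : IsIso (kernel.map f f' p q w) := by
  refine ⟨kernel.map f' f (inv p) (inv q)
    (by rw [IsIso.comp_inv_eq, Category.assoc, w, IsIso.inv_hom_id_assoc]), ?_, ?_⟩ <;>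
    · apply equalizer.hom_ext
      simp

lemma projective_cokernel_comp_iso {X Y Z : C} (f : X ⟶ Y) (g : Y ⟶ Z) [IsIso g]
    (h : Projective (cokernel f)) : Projective (cokernel (f ≫ g)) :=
  Projective.of_iso (cokernelCompIsIso f g).symm h

lemma isIso_f_of_isIso {ι : Type*} {c : ComplexShape ι} {K L : HomologicalComplex C c}
    (φ : K ⟶ L) [IsIso φ] (n : ι) : IsIso (φ.f n) := by
  change IsIso ((HomologicalComplex.eval C c n).map φ)
  infer_instance

lemma isZero_complex {ι : Type*} {c : ComplexShape ι} (K : HomologicalComplex C c)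
    (h : ∀ n, IsZero (K.X n)) : IsZero K := by
  rw [IsZero.iff_id_eq_zero]
  ext n
  apply (h n).eq_of_src

lemma isZero_homology_of_isZero {K : ChainComplex C ℕ} (hK : ∀ n, IsZero (K.X n)) (i : ℕ) :
    IsZero (K.homology i) := by
  rw [← HomologicalComplex.exactAt_iff_isZero_homology]
  rw [HomologicalComplex.exactAt_iff]
  exact ShortComplex.exact_of_isZero_X₂ _ (hK i)

lemma quasiIso_of_isZero {K L : ChainComplex C ℕ} (φ : K ⟶ L) (hK : ∀ n, IsZero (K.X n))
    (hL : ∀ n, IsZero (L.X n)) : QuasiIso φ := by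
  rw [quasiIso_iff]
  intro i
  rw [quasiIsoAt_iff_isIso_homologyMap]
  exact isIso_of_isZero _ (isZero_homology_of_isZero hK i) (isZero_homology_of_isZero hL i)

end Helpers

section QCrit
attribute [local instance] CategoryTheory.Abelian.Pseudoelement.objectToSort
  CategoryTheory.Abelian.Pseudoelement.homToFun

variable {C : Type*} [Category C] [Abelian C]

lemma next_nat (n : ℕ) : (ComplexShape.down ℕ).next n = n - 1 := by
  cases n
  · exact ChainComplex.next_nat_zero
  · exact ChainComplex.next_nat_succ _

lemma d_zero_at_zero (K : ChainComplex C ℕ) : K.d 0 (0 - 1) = 0 :=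
  K.shape _ _ (by simp [ComplexShape.down])

/-- The exact sequence `cycles n ⟶ X n ⟶ X (n-1)`. -/
lemma exact_cyc (K : ChainComplex C ℕ) (n : ℕ) :
    (ShortComplex.mk (K.iCycles n) (K.d n (n - 1)) (K.iCycles_d n (n - 1))).Exact :=
  ShortComplex.exact_of_f_is_kernel _ (K.cyclesIsKernel n (n - 1) (next_nat n))

/-- The exact sequence `X (n+1) ⟶ cycles n ⟶ homology n`. -/
lemma exact_toCycles (K : ChainComplex C ℕ) (n : ℕ) :
    (ShortComplex.mk (K.toCycles (n + 1) n) (K.homologyπ n)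
      (K.toCycles_comp_homologyπ (n + 1) n)).Exact :=
  ShortComplex.exact_of_g_is_cokernel _ (K.homologyIsCokernel (n + 1) n (ChainComplex.prev ℕ n))

lemma quasiIso_of_pseudo_lift {P Q : ChainComplex C ℕ} (ε : P ⟶ Q)
    (h0 : Epi (ε.f 0))
    (hA : ∀ (n : ℕ) (c : Q.X (n + 1)) (z : P.X n),
      (P.d n (n - 1)) z = 0 → (ε.f n) z = (Q.d (n + 1) n) c →
      ∃ w : P.X (n + 1), (ε.f (n + 1)) w = c ∧ (P.d (n + 1) n) w = z) :
    QuasiIso ε := by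
  have hca := fun {P Q R : C} (f : P ⟶ Q) (g : Q ⟶ R) (a : Pseudoelement P) =>
    Pseudoelement.comp_apply f g a
  rw [quasiIso_iff]
  intro i
  rw [quasiIsoAt_iff_isIso_homologyMap]
  have hsurj : Function.Surjective
      (Pseudoelement.pseudoApply (HomologicalComplex.cyclesMap ε i)) := by
    intro z
    cases i with
    | zero =>
      have h1 : IsIso (P.iCycles 0) := P.isIso_iCycles 0 0 ChainComplex.next_nat_zero
        (P.shape _ _ (by simp [ComplexShape.down]))
      have h2 : Epi (P.iCycles 0 ≫ ε.f 0) := epi_comp _ _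
      obtain ⟨w, hw⟩ := pseudo_surjective_of_epi (P.iCycles 0 ≫ ε.f 0) ((Q.iCycles 0) z)
      refine ⟨w, pseudo_injective_of_mono (Q.iCycles 0) ?_⟩
      rw [← hca, HomologicalComplex.cyclesMap_i, hca]
      rw [hca] at hw
      exact hw
    | succ n =>
      have hc : (Q.d (n + 1) n) ((Q.iCycles (n + 1)) z) = 0 := by
        rw [← hca, Q.iCycles_d, Pseudoelement.zero_apply]
      obtain ⟨w, hw1, hw2⟩ := hA n ((Q.iCycles (n + 1)) z) 0 (by rw [apply_zero])
        (by rw [apply_zero, hc])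
      obtain ⟨wt, hwt⟩ := pseudo_exact_of_exact (exact_cyc P (n + 1)) w hw2
      refine ⟨wt, pseudo_injective_of_mono (Q.iCycles (n + 1)) ?_⟩
      rw [← hca, HomologicalComplex.cyclesMap_i, hca]
      show Pseudoelement.pseudoApply (ε.f (n+1))
        (Pseudoelement.pseudoApply (P.iCycles (n+1)) wt) = _
      rw [hwt, hw1]
  have hm : Mono (HomologicalComplex.homologyMap ε i) := by
    apply mono_of_zero_of_map_zero
    intro a ha
    obtain ⟨z, hz⟩ := pseudo_surjective_of_epi (P.homologyπ i) a
    have h1 : (Q.homologyπ i) ((HomologicalComplex.cyclesMap ε i) z) = 0 := by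
      rw [← hca, ← HomologicalComplex.homologyπ_naturality, hca, hz, ha]
    obtain ⟨cc, hcc⟩ := pseudo_exact_of_exact (exact_toCycles Q i) _ h1
    obtain ⟨w, hw1, hw2⟩ := hA i cc ((P.iCycles i) z)
      (by rw [← hca, P.iCycles_d, Pseudoelement.zero_apply])
      (by
        have e1 : (ε.f i) ((P.iCycles i) z)
            = (Q.iCycles i) ((HomologicalComplex.cyclesMap ε i) z) := by
          rw [← hca, ← hca, HomologicalComplex.cyclesMap_i]
        have e2 : (Q.iCycles i) ((Q.toCycles (i + 1) i) cc) = (Q.d (i + 1) i) cc := by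
          rw [← hca, Q.toCycles_i]
        rw [e1, ← hcc]
        exact e2)
    have hz' : (P.toCycles (i + 1) i) w = z := by
      apply pseudo_injective_of_mono (P.iCycles i)
      have : (P.iCycles i) ((P.toCycles (i + 1) i) w) = (P.d (i + 1) i) w := by
        rw [← hca, P.toCycles_i]
      rw [this, hw2]
    rw [← hz, ← hz', ← hca, P.toCycles_comp_homologyπ, Pseudoelement.zero_apply]
  have he : Epi (HomologicalComplex.homologyMap ε i) := by
    apply epi_of_pseudo_surjective
    intro b
    obtain ⟨z, hz⟩ := pseudo_surjective_of_epi (Q.homologyπ i) b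
    obtain ⟨w, hw⟩ := hsurj z
    exact ⟨(P.homologyπ i) w, by
      rw [← hca, HomologicalComplex.homologyπ_naturality, hca, hw, hz]⟩
  exact isIso_of_mono_of_epi _

end QCrit

section Setup

variable {A : Type u} [Category.{v} A] [Abelian A]
variable (X : FilteredComplex A)

/-- lower bound of the filtration -/
noncomputable def P0 : ℤ := X.bounded_below.choose

lemma hP0 : ∀ p ≤ P0 X, ∀ n : ℕ, IsZero ((X.W p).X n) := X.bounded_below.choose_spec

/-- a degreewise exhaustion bound -/
noncomputable def pf (n : ℕ) : ℤ := (X.biregular n).choose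

lemma hpf (n : ℕ) : IsIso ((X.toX (pf X n)).f n) := (X.biregular n).choose_spec

/-- monotone exhaustion bound -/
noncomputable def cf : ℕ → ℤ
  | 0 => pf X 0
  | (n + 1) => max (cf n) (pf X (n + 1))

lemma cf_mono : Monotone (cf X) :=
  monotone_nat_of_le_succ (fun n => le_max_left _ _)

lemma pf_le_cf (n : ℕ) : pf X n ≤ cf X n := by
  cases n with
  | zero => exact le_rfl
  | succ n => exact le_max_right _ _

lemma toX_iso (n : ℕ) (p : ℤ) (h : pf X n ≤ p) : IsIso ((X.toX p).f n) := by
  obtain ⟨d, rfl⟩ : ∃ d : ℕ, p = pf X n + d := ⟨(p - pf X n).toNat, by omega⟩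
  clear h
  induction d with
  | zero => rw [show pf X n + ((0:ℕ):ℤ) = pf X n by push_cast; ring]; exact hpf X n
  | succ d ih =>
    rw [show pf X n + ((d + 1 : ℕ) : ℤ) = (pf X n + d) + 1 by push_cast; ring]
    have hc := congr_arg (fun φ => HomologicalComplex.Hom.f φ n) (X.compat (pf X n + d))
    dsimp at hc
    haveI := X.mono_toX (pf X n + d + 1)
    haveI : Mono ((X.toX (pf X n + d + 1)).f n) := inferInstance
    haveI : Epi ((X.ι (pf X n + d)).f n ≫ (X.toX (pf X n + d + 1)).f n) := by
      rw [hc]; infer_instance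
    haveI : Epi ((X.toX (pf X n + d + 1)).f n) := epi_of_epi ((X.ι (pf X n + d)).f n) _
    exact isIso_of_mono_of_epi _

lemma iota_iso (n : ℕ) (p : ℤ) (h : pf X n ≤ p) : IsIso ((X.ι p).f n) := by
  haveI h1 := toX_iso X n p h
  haveI h2 := toX_iso X n (p + 1) (by omega)
  have hc := congr_arg (fun φ => HomologicalComplex.Hom.f φ n) (X.compat p)
  dsimp at hc
  rw [show (X.ι p).f n = (X.toX p).f n ≫ inv ((X.toX (p + 1)).f n) from by
    rw [← hc]; simp]
  infer_instance

/-- The filtration reindexed over `ℕ`. -/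
noncomputable abbrev Wo (k : ℕ) : ChainComplex A ℕ := X.W (P0 X + k)

noncomputable def ιo (k : ℕ) : Wo X k ⟶ Wo X (k + 1) :=
  X.ι (P0 X + k) ≫ eqToHom (congrArg X.W (by push_cast; ring))

noncomputable def toXo (k : ℕ) : Wo X k ⟶ X.X := X.toX (P0 X + k)

noncomputable def cN (n : ℕ) : ℕ := (cf X n - P0 X).toNat

lemma cN_mono : Monotone (cN X) := fun a b h => by
  have := cf_mono X h
  simp only [cN]
  omega

lemma Wo_zero (n : ℕ) : IsZero ((Wo X 0).X n) := by
  apply hP0 X _ _ n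
  simp

lemma toX_eqToHom {p q : ℤ} (h : p = q) :
    eqToHom (congrArg X.W h) ≫ X.toX q = X.toX p := by subst h; simp

lemma ι_eqToHom {p q : ℤ} (h : p = q) :
    eqToHom (congrArg X.W h) ≫ X.ι q = X.ι p ≫ eqToHom (congrArg X.W (by rw [h])) := by
  subst h; simp

lemma ιo_toXo (k : ℕ) : ιo X k ≫ toXo X (k + 1) = toXo X k := by
  rw [ιo, toXo, toXo, Category.assoc, toX_eqToHom X (by push_cast; ring), X.compat]

lemma ιo_iso (n m k : ℕ) (hm : m ≤ n) (hk : cN X n ≤ k) : IsIso ((ιo X k).f m) := by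
  haveI : IsIso ((X.ι (P0 X + k)).f m) := by
    apply iota_iso X m
    have h1 : pf X m ≤ cf X n := le_trans (pf_le_cf X m) (cf_mono X hm)
    have h2 : cf X n - P0 X ≤ (cf X n - P0 X).toNat := Int.self_le_toNat _
    have : (cN X n : ℤ) ≤ (k : ℤ) := by exact_mod_cast hk
    simp only [cN] at this
    omega
  rw [ιo]
  haveI : IsIso ((eqToHom (congrArg X.W (show P0 X + (k:ℤ) + 1 = P0 X + ((k:ℕ)+1:ℕ) by push_cast; ring)) :
      X.W (P0 X + (k:ℤ) + 1) ⟶ Wo X (k+1))) := inferInstance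
  have := isIso_f_of_isIso (C := A) (eqToHom (congrArg X.W
    (show P0 X + (k:ℤ) + 1 = P0 X + ((k:ℕ)+1:ℕ) by push_cast; ring)) : X.W (P0 X + (k:ℤ) + 1) ⟶ Wo X (k+1)) m
  rw [HomologicalComplex.comp_f]
  exact IsIso.comp_isIso

lemma toXo_iso (n k : ℕ) (hk : cN X n ≤ k) : IsIso ((toXo X k).f n) := by
  apply toX_iso X n
  have h1 : pf X n ≤ cf X n := pf_le_cf X n
  have h2 : cf X n - P0 X ≤ (cf X n - P0 X).toNat := Int.self_le_toNat _
  have : (cN X n : ℤ) ≤ (k : ℤ) := by exact_mod_cast hk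
  simp only [cN] at this
  omega

end Setup

section Inner

variable {A : Type u} [Category.{v} A] [Abelian A] [EnoughProjectives A]

/-- The result of the generic inner tower construction. -/
structure InnerRes (B : ℕ → A) (β : ∀ k, B k ⟶ B (k + 1)) (m : ℕ) where
  P : ℕ → A
  j : ∀ k, P k ⟶ P (k + 1)
  κ : ∀ k, P k ⟶ B k
  epi : ∀ k, Epi (κ k)
  comm : ∀ k, j k ≫ κ (k + 1) = κ k ≫ β k
  zero : IsZero (P 0)
  mono : ∀ k, Mono (j k)
  stab : ∀ k, m ≤ k → IsIso (j k)
  coker : ∀ k, Projective (cokernel (j k))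

/-- Generic construction of a tower of projective covers over a tower of targets. -/
noncomputable def inner (B : ℕ → A) (β : ∀ k, B k ⟶ B (k + 1)) (hB0 : IsZero (B 0))
    (m : ℕ) (hst : ∀ k, m ≤ k → IsIso (β k)) : InnerRes B β m := by
  classical
  let step : ∀ (k : ℕ) (s : Σ' (Pk : A) (κk : Pk ⟶ B k), Epi κk),
      Σ' (t : Σ' (Pk : A) (κk : Pk ⟶ B (k + 1)), Epi κk) (jk : s.1 ⟶ t.1),
        (jk ≫ t.2.1 = s.2.1 ≫ β k) ∧ Mono jk ∧ (m ≤ k → IsIso jk) ∧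
        Projective (cokernel jk) := by
    intro k s
    by_cases h : m ≤ k
    · haveI := hst k h
      haveI := s.2.2
      refine ⟨⟨s.1, s.2.1 ≫ β k, epi_comp _ _⟩, 𝟙 _, by simp, inferInstance,
        fun _ => inferInstance, projective_of_isZero (isZero_cokernel_of_epi _)⟩
    · haveI := s.2.2
      refine ⟨⟨s.1 ⊞ Projective.over (B (k + 1)),
          biprod.desc (s.2.1 ≫ β k) (Projective.π _), ?_⟩,
          biprod.inl, by simp, inferInstance, fun hm => absurd hm h, ?_⟩
      · exact epi_of_epi_fac (biprod.inr_desc _ _)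
      · exact Projective.of_iso (cokernelBiprodInlIso).symm inferInstance
  let T : ∀ k, Σ' (Pk : A) (κk : Pk ⟶ B k), Epi κk :=
    fun k => Nat.rec ⟨0, 0, epi_of_isZero_tgt _ hB0⟩ (fun k s => (step k s).1) k
  exact
    { P := fun k => (T k).1
      j := fun k => (step k (T k)).2.1
      κ := fun k => (T k).2.1
      epi := fun k => (T k).2.2
      comm := fun k => (step k (T k)).2.2.1
      zero := isZero_zero A
      mono := fun k => (step k (T k)).2.2.2.1
      stab := fun k hk => (step k (T k)).2.2.2.2.1 hk
      coker := fun k => (step k (T k)).2.2.2.2.2 }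

end Inner

section States

variable {A : Type u} [Category.{v} A] [Abelian A] [EnoughProjectives A]
variable (X : FilteredComplex A)

/-- cycles of the filtration complexes at level `n` -/
noncomputable abbrev WZ (n k : ℕ) : A := kernel ((Wo X k).d n (n - 1))

/-- inclusion of cycles -/
noncomputable def WZι (n k : ℕ) : WZ X n k ⟶ (Wo X k).X n := kernel.ι _

/-- induced map on cycles of the filtration -/
noncomputable def WZmap (n k : ℕ) : WZ X n k ⟶ WZ X n (k + 1) :=
  kernel.map _ _ ((ιo X k).f n) ((ιo X k).f (n - 1)) (((ιo X k).comm n (n - 1)).symm)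

lemma WZmap_ι (n k : ℕ) : WZmap X n k ≫ WZι X n (k + 1) = WZι X n k ≫ (ιo X k).f n := by
  simp [WZmap, WZι]

/-- the map from degree `n+1` to the cycles in degree `n` -/
noncomputable def dtil (n k : ℕ) : (Wo X k).X (n + 1) ⟶ WZ X n k :=
  kernel.lift _ ((Wo X k).d (n + 1) n) (by simp)

lemma dtil_ι (n k : ℕ) : dtil X n k ≫ WZι X n k = (Wo X k).d (n + 1) n := by
  simp [dtil, WZι]

/-- The state of the construction at level `n` : a tower of objects over the filtration,
together with abstract cycle data. -/
structure St (n : ℕ) where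
  P : ℕ → A
  j : ∀ k, P k ⟶ P (k + 1)
  e : ∀ k, P k ⟶ (Wo X k).X n
  Z : ℕ → A
  iZ : ∀ k, Z k ⟶ P k
  jZ : ∀ k, Z k ⟶ Z (k + 1)
  zeta : ∀ k, Z k ⟶ WZ X n k
  comm_je : ∀ k, j k ≫ e (k + 1) = e k ≫ (ιo X k).f n
  comm_jZ : ∀ k, jZ k ≫ iZ (k + 1) = iZ k ≫ j k
  comm_zeta : ∀ k, iZ k ≫ e k = zeta k ≫ WZι X n k
  comm_zetaJ : ∀ k, jZ k ≫ zeta (k + 1) = zeta k ≫ WZmap X n k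
  zeroP : IsZero (P 0)
  zeroZ : IsZero (Z 0)
  monoJ : ∀ k, Mono (j k)
  stabJ : ∀ k, cN X n ≤ k → IsIso (j k)
  stabJZ : ∀ k, cN X n ≤ k → IsIso (jZ k)
  projCoker : ∀ k, Projective (cokernel (j k))

/-- The connecting data between two consecutive levels. -/
structure Conn (n : ℕ) (s : St X n) (s' : St X (n + 1)) where
  d : ∀ k, s'.P k ⟶ s.P k
  dZ : ∀ k, s'.P k ⟶ s.Z k
  hdZ : ∀ k, dZ k ≫ s.iZ k = d k
  cond : ∀ k, s'.e k ≫ dtil X n k = dZ k ≫ s.zeta k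
  EA : ∀ k, Epi (pullback.lift (s'.e k) (dZ k) (cond k))
  comm_jd : ∀ k, s'.j k ≫ d (k + 1) = d k ≫ s.j k
  comm_de : ∀ k, d k ≫ s.e k = s'.e k ≫ (Wo X k).d (n + 1) n
  iZd : ∀ k, s'.iZ k ≫ d k = 0
  isKer : ∀ k, IsLimit (KernelFork.ofι (s'.iZ k) (iZd k))

/-- The base level of the construction. -/
noncomputable def base : Σ' (s : St X 0), (∀ k, Epi (s.e k)) ∧ (∀ k, IsIso (s.iZ k)) := by
  have I := inner (fun k => (Wo X k).X 0) (fun k => (ιo X k).f 0) (Wo_zero X 0)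
    (cN X 0) (fun k hk => ιo_iso X 0 0 k le_rfl hk)
  have hzeta : ∀ k, I.κ k ≫ (Wo X k).d 0 (0 - 1) = 0 := fun k => by
    rw [d_zero_at_zero, comp_zero]
  let st : St X 0 :=
    { P := I.P
      j := I.j
      e := I.κ
      Z := I.P
      iZ := fun _ => 𝟙 _
      jZ := I.j
      zeta := fun k => kernel.lift _ (I.κ k) (hzeta k)
      comm_je := I.comm
      comm_jZ := fun k => by simp
      comm_zeta := fun k => by rw [Category.id_comp, WZι, kernel.lift_ι]
      comm_zetaJ := fun k => by
        apply equalizer.hom_ext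
        have h1 := WZmap_ι X 0 k
        simp only [WZι] at h1 ⊢
        simp only [Category.assoc, kernel.lift_ι, h1, kernel.lift_ι_assoc]
        exact I.comm k
      zeroP := I.zero
      zeroZ := I.zero
      monoJ := I.mono
      stabJ := I.stab
      stabJZ := I.stab
      projCoker := I.coker }
  exact ⟨st, I.epi, fun k => inferInstance⟩

/-- One step of the construction. -/
noncomputable def ostep (n : ℕ) (s : St X n) : Σ' (s' : St X (n + 1)), Conn X n s s' := by
  have eq1 : ∀ k, dtil X n k ≫ WZmap X n k = (ιo X k).f (n + 1) ≫ dtil X n (k + 1) := by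
    intro k
    apply equalizer.hom_ext
    have h1 := WZmap_ι X n k
    have h2 := dtil_ι X n k
    have h3 := dtil_ι X n (k + 1)
    simp only [WZι] at h1 h2 h3
    simp only [Category.assoc, h1, h3]
    rw [reassoc_of% h2]
    exact ((ιo X k).comm (n + 1) n).symm
  have eq2 : ∀ k, s.zeta k ≫ WZmap X n k = s.jZ k ≫ s.zeta (k + 1) :=
    fun k => (s.comm_zetaJ k).symm
  let Apb : ℕ → A := fun k => pullback (dtil X n k) (s.zeta k)
  let α : ∀ k, Apb k ⟶ Apb (k + 1) := fun k =>
    pullback.map _ _ _ _ ((ιo X k).f (n + 1)) (s.jZ k) (WZmap X n k) (eq1 k) (eq2 k)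
  have hA0 : IsZero (Apb 0) := isZero_pullback _ _ (Wo_zero X (n + 1)) s.zeroZ
  have hAst : ∀ k, cN X (n + 1) ≤ k → IsIso (α k) := by
    intro k hk
    haveI : IsIso ((ιo X k).f (n + 1)) := ιo_iso X (n + 1) (n + 1) k le_rfl hk
    haveI : IsIso (s.jZ k) := s.stabJZ k (le_trans (cN_mono X (Nat.le_succ n)) hk)
    haveI : IsIso ((ιo X k).f n) := ιo_iso X (n + 1) n k (Nat.le_succ n) hk
    haveI : IsIso ((ιo X k).f (n - 1)) := ιo_iso X (n + 1) (n - 1) k (by omega) hk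
    haveI : IsIso (WZmap X n k) := isIso_kernel_map _ _ _ _ (((ιo X k).comm n (n - 1)).symm)
    exact inferInstance
  have I := inner Apb α hA0 (cN X (n + 1)) hAst
  let e' : ∀ k, I.P k ⟶ (Wo X k).X (n + 1) := fun k => I.κ k ≫ pullback.fst _ _
  let dZ' : ∀ k, I.P k ⟶ s.Z k := fun k => I.κ k ≫ pullback.snd _ _
  let d' : ∀ k, I.P k ⟶ s.P k := fun k => dZ' k ≫ s.iZ k
  have comm_je' : ∀ k, I.j k ≫ e' (k + 1) = e' k ≫ (ιo X k).f (n + 1) := by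
    intro k
    simp only [e', ← Category.assoc, I.comm k]
    simp only [Category.assoc]
    exact congrArg (I.κ k ≫ ·) (pullback.lift_fst _ _ _)
  have comm_jdZ' : ∀ k, I.j k ≫ dZ' (k + 1) = dZ' k ≫ s.jZ k := by
    intro k
    simp only [dZ', ← Category.assoc, I.comm k]
    simp only [Category.assoc]
    exact congrArg (I.κ k ≫ ·) (pullback.lift_snd _ _ _)
  have comm_jd' : ∀ k, I.j k ≫ d' (k + 1) = d' k ≫ s.j k := by
    intro k
    simp only [d', ← Category.assoc, comm_jdZ' k]
    simp [s.comm_jZ k]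
  have cond' : ∀ k, e' k ≫ dtil X n k = dZ' k ≫ s.zeta k := by
    intro k
    simp only [e', dZ', Category.assoc, pullback.condition]
  have comm_de' : ∀ k, d' k ≫ s.e k = e' k ≫ (Wo X k).d (n + 1) n := by
    intro k
    have h2 := dtil_ι X n k
    rw [WZι] at h2
    simp only [d', dZ', e', Category.assoc, s.comm_zeta k, ← h2]
    rw [← Category.assoc (pullback.snd _ _), ← pullback.condition]
    simp [WZι]
  let st : St X (n + 1) :=
    { P := I.P
      j := I.j
      e := e'
      Z := fun k => kernel (d' k)
      iZ := fun k => kernel.ι _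
      jZ := fun k => kernel.map _ _ (I.j k) (s.j k) (comm_jd' k).symm
      zeta := fun k => kernel.map _ _ (e' k) (s.e k) (comm_de' k)
      comm_je := comm_je'
      comm_jZ := fun k => by simp
      comm_zeta := fun k => by rw [WZι]; simp
      comm_zetaJ := fun k => by
        apply equalizer.hom_ext
        have h1 := WZmap_ι X (n + 1) k
        simp only [WZι] at h1 ⊢
        simp only [Category.assoc, h1]
        simp [comm_je' k]
      zeroP := I.zero
      zeroZ := isZero_of_mono (kernel.ι (d' 0)) I.zero
      monoJ := I.mono
      stabJ := I.stab
      stabJZ := fun k hk => by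
        haveI := I.stab k hk
        haveI := s.stabJ k (le_trans (cN_mono X (Nat.le_succ n)) hk)
        exact isIso_kernel_map _ _ _ _ (comm_jd' k).symm
      projCoker := I.coker }
  refine ⟨st, ?_⟩
  exact
    { d := d'
      dZ := dZ'
      hdZ := fun k => rfl
      cond := cond'
      EA := fun k => by
        have h : pullback.lift (e' k) (dZ' k) (cond' k) = I.κ k := by
          apply pullback.hom_ext
          · exact pullback.lift_fst _ _ _
          · exact pullback.lift_snd _ _ _
        rw [show (pullback.lift (st.e k) (dZ' k) (cond' k)) = I.κ k from h]
        exact I.epi k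
      comm_jd := comm_jd'
      comm_de := comm_de'
      iZd := fun k => kernel.condition _
      isKer := fun k => kernelIsKernel (d' k) }

end States

section Tower

variable {A : Type u} [Category.{v} A] [Abelian A] [EnoughProjectives A]
variable (X : FilteredComplex A)

/-- The tower of states. -/
noncomputable def TT : ∀ n, St X n := fun n => Nat.rec (base X).1 (fun n s => (ostep X n s).1) n

/-- The connecting data of the tower. -/
noncomputable def DD (n : ℕ) : Conn X n (TT X n) (TT X (n + 1)) := (ostep X n (TT X n)).2

lemma TT0_epi (k : ℕ) : Epi ((TT X 0).e k) := (base X).2.1 k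

lemma TT0_isoZ (k : ℕ) : IsIso ((TT X 0).iZ k) := (base X).2.2 k

/-- The `k`-th level of the filtration of the resolution. -/
noncomputable def U (k : ℕ) : ChainComplex A ℕ :=
  ChainComplex.of (fun n => (TT X n).P k) (fun n => (DD X n).d k) (fun n => by
    show (DD X (n + 1)).d k ≫ (DD X n).d k = 0
    rw [← (DD X (n + 1)).hdZ k, Category.assoc, (DD X n).iZd k, comp_zero])

lemma U_d (k n : ℕ) : (U X k).d (n + 1) n = (DD X n).d k := by
  simp [U, ChainComplex.of_d]

/-- The inclusion between consecutive levels of the filtration. -/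
noncomputable def J (k : ℕ) : U X k ⟶ U X (k + 1) :=
  ChainComplex.ofHom (fun n => (TT X n).j k) (fun n => by rw [U_d, U_d]; exact (DD X n).comm_jd k)

lemma J_f (k n : ℕ) : (J X k).f n = (TT X n).j k := rfl

/-- The augmentation from the resolution to the filtration. -/
noncomputable def EE (k : ℕ) : U X k ⟶ Wo X k where
  f n := (TT X n).e k
  comm' := by
    intro i j hij
    simp only [ComplexShape.down_Rel] at hij
    subst hij
    rw [U_d]
    exact ((DD X j).comm_de k).symm

lemma EE_f (k n : ℕ) : (EE X k).f n = (TT X n).e k := rfl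

lemma J_EE (k : ℕ) : J X k ≫ EE X (k + 1) = EE X k ≫ ιo X k := by
  ext n
  exact (TT X n).comm_je k

lemma isZero_U0 : IsZero (U X 0) :=
  isZero_complex _ (fun n => (TT X n).zeroP)

/-- Iterated inclusion maps in each level. -/
noncomputable def JJd (n a : ℕ) : ∀ d : ℕ, (TT X n).P a ⟶ (TT X n).P (a + d)
  | 0 => 𝟙 _
  | (d + 1) => JJd n a d ≫ (TT X n).j (a + d)

/-- Iterated inclusion maps. -/
noncomputable def JJ (n a b : ℕ) : (TT X n).P a ⟶ (TT X n).P b :=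
  if h : a ≤ b then JJd X n a (b - a) ≫ eqToHom (congrArg (TT X n).P (by omega)) else 0

lemma JJ_eq (n a d : ℕ) : JJ X n a (a + d) = JJd X n a d := by
  rw [JJ, dif_pos (Nat.le_add_right a d)]
  have key : ∀ (e : ℕ) (_ : e = d) (w : (TT X n).P (a + e) = (TT X n).P (a + d)),
      JJd X n a e ≫ eqToHom w = JJd X n a d := by
    intro e he w
    subst he
    simp
  exact key _ (by omega) _

lemma JJ_self (n a : ℕ) : JJ X n a a = 𝟙 _ := by
  have := JJ_eq X n a 0
  simpa [JJd] using this

lemma JJ_succ_right (n a b : ℕ) (h : a ≤ b) :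
    JJ X n a (b + 1) = JJ X n a b ≫ (TT X n).j b := by
  obtain ⟨d, rfl⟩ : ∃ d, b = a + d := ⟨b - a, by omega⟩
  have e1 : JJ X n a (a + d + 1) = JJd X n a (d + 1) := JJ_eq X n a (d + 1)
  rw [e1, JJ_eq]
  rfl

lemma JJ_succ (n a : ℕ) : JJ X n a (a + 1) = (TT X n).j a := by
  rw [JJ_succ_right X n a a le_rfl, JJ_self, Category.id_comp]

lemma JJ_comp (n a b c : ℕ) (hab : a ≤ b) (hbc : b ≤ c) :
    JJ X n a b ≫ JJ X n b c = JJ X n a c := by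
  induction c, hbc using Nat.le_induction with
  | base => rw [JJ_self, Category.comp_id]
  | succ c hc ih =>
    rw [JJ_succ_right X n b c hc, JJ_succ_right X n a c (hab.trans hc), ← Category.assoc, ih]

lemma JJ_left (n a b : ℕ) (h : a + 1 ≤ b) :
    JJ X n a b = (TT X n).j a ≫ JJ X n (a + 1) b := by
  rw [← JJ_succ X n a, JJ_comp X n a (a + 1) b (by omega) h]

lemma JJ_mono (n a b : ℕ) (h : a ≤ b) : Mono (JJ X n a b) := by
  induction b, h using Nat.le_induction with
  | base => rw [JJ_self]; infer_instance
  | succ b hb ih =>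
    rw [JJ_succ_right X n a b hb]
    haveI := (TT X n).monoJ b
    exact mono_comp _ _

lemma JJ_iso (n a b : ℕ) (ha : cN X n ≤ a) (h : a ≤ b) : IsIso (JJ X n a b) := by
  induction b, h using Nat.le_induction with
  | base => rw [JJ_self]; infer_instance
  | succ b hb ih =>
    rw [JJ_succ_right X n a b hb]
    haveI := (TT X n).stabJ b (ha.trans hb)
    exact IsIso.comp_isIso

lemma JJ_d (n a b : ℕ) (h : a ≤ b) :
    JJ X (n + 1) a b ≫ (DD X n).d b = (DD X n).d a ≫ JJ X n a b := by
  induction b, h using Nat.le_induction with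
  | base => rw [JJ_self, JJ_self, Category.id_comp, Category.comp_id]
  | succ b hb ih =>
    rw [JJ_succ_right X (n + 1) a b hb, JJ_succ_right X n a b hb, Category.assoc,
      (DD X n).comm_jd b, ← Category.assoc, ih, Category.assoc]

lemma JJ_etoX (n a b : ℕ) (h : a ≤ b) :
    JJ X n a b ≫ (TT X n).e b ≫ (toXo X b).f n = (TT X n).e a ≫ (toXo X a).f n := by
  induction b, h using Nat.le_induction with
  | base => rw [JJ_self, Category.id_comp]
  | succ b hb ih =>
    rw [JJ_succ_right X n a b hb, Category.assoc, ← ih]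
    congr 1
    rw [← Category.assoc, (TT X n).comm_je b, Category.assoc]
    congr 1
    have := congr_arg (fun φ => HomologicalComplex.Hom.f φ n) (ιo_toXo X b)
    dsimp at this
    rw [← this]

end Tower

section Total

variable {A : Type u} [Category.{v} A] [Abelian A] [EnoughProjectives A]
variable (X : FilteredComplex A)

/-- The stabilized transition map into level `cN n`. -/
noncomputable def G (n a : ℕ) : (TT X n).P a ⟶ (TT X n).P (cN X n) :=
  haveI := JJ_iso X n (cN X n) (max a (cN X n)) le_rfl (le_max_right _ _)
  JJ X n a (max a (cN X n)) ≫ inv (JJ X n (cN X n) (max a (cN X n)))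

lemma G_spec (n a m : ℕ) (h1 : a ≤ m) (h2 : cN X n ≤ m) :
    G X n a ≫ JJ X n (cN X n) m = JJ X n a m := by
  have hle : max a (cN X n) ≤ m := max_le h1 h2
  clear h1 h2
  induction m, hle using Nat.le_induction with
  | base =>
    haveI := JJ_iso X n (cN X n) (max a (cN X n)) le_rfl (le_max_right _ _)
    show (JJ X n a (max a (cN X n)) ≫ inv (JJ X n (cN X n) (max a (cN X n)))) ≫ _ = _
    simp
  | succ m hm ih =>
    rw [← JJ_comp X n (cN X n) m (m + 1) (le_trans (le_max_right _ _) hm) (by omega),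
      ← Category.assoc, ih, JJ_comp X n a m (m + 1) (le_trans (le_max_left _ _) hm) (by omega)]

lemma G_cN (n : ℕ) : G X n (cN X n) = 𝟙 _ := by
  have := G_spec X n (cN X n) (cN X n) le_rfl le_rfl
  rwa [JJ_self, Category.comp_id] at this

lemma G_j (n a : ℕ) : (TT X n).j a ≫ G X n (a + 1) = G X n a := by
  set m := max (a + 1) (cN X n) with hm
  have h1 : a + 1 ≤ m := le_max_left _ _
  have h2 : cN X n ≤ m := le_max_right _ _
  haveI := JJ_mono X n (cN X n) m h2
  rw [← cancel_mono (JJ X n (cN X n) m), Category.assoc, G_spec X n (a + 1) m h1 h2,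
    G_spec X n a m (by omega) h2, ← JJ_left X n a m h1]

lemma G_mono (n a : ℕ) : Mono (G X n a) := by
  set m := max a (cN X n) with hm
  haveI := JJ_mono X n a m (le_max_left _ _)
  have := G_spec X n a m (le_max_left _ _) (le_max_right _ _)
  exact mono_of_mono_fac this

lemma G_d (n a : ℕ) :
    G X (n + 1) a ≫ (DD X n).d (cN X (n + 1)) ≫ G X n (cN X (n + 1)) =
      (DD X n).d a ≫ G X n a := by
  set m := max a (cN X (n + 1)) with hm
  have h1 : a ≤ m := le_max_left _ _
  have h2 : cN X (n + 1) ≤ m := le_max_right _ _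
  have h3 : cN X n ≤ m := le_trans (cN_mono X (Nat.le_succ n)) h2
  haveI := JJ_mono X n (cN X n) m h3
  rw [← cancel_mono (JJ X n (cN X n) m)]
  rw [Category.assoc, Category.assoc, Category.assoc, G_spec X n (cN X (n + 1)) m h2 h3,
    G_spec X n a m h1 h3, ← JJ_d X n (cN X (n + 1)) m h2, ← Category.assoc,
    G_spec X (n + 1) a m h1 h2, JJ_d X n a m h1]

lemma G_etoX (n a : ℕ) :
    G X n a ≫ (TT X n).e (cN X n) ≫ (toXo X (cN X n)).f n =
      (TT X n).e a ≫ (toXo X a).f n := by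
  set m := max a (cN X n) with hm
  have h1 : a ≤ m := le_max_left _ _
  have h2 : cN X n ≤ m := le_max_right _ _
  rw [← JJ_etoX X n (cN X n) m h2, ← Category.assoc, G_spec X n a m h1 h2,
    JJ_etoX X n a m h1]

/-- The total complex of the resolution. -/
noncomputable def tot : ChainComplex A ℕ :=
  ChainComplex.of (fun n => (TT X n).P (cN X n))
    (fun n => (DD X n).d (cN X (n + 1)) ≫ G X n (cN X (n + 1)))
    (fun n => by
      show ((DD X (n + 1)).d (cN X (n + 2)) ≫ G X (n + 1) (cN X (n + 2))) ≫
        ((DD X n).d (cN X (n + 1)) ≫ G X n (cN X (n + 1))) = 0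
      rw [Category.assoc, G_d X n (cN X (n + 2)), ← Category.assoc,
        ← (DD X (n + 1)).hdZ, Category.assoc ((DD X (n+1)).dZ _), (DD X n).iZd,
        comp_zero, zero_comp])

lemma tot_d (n : ℕ) :
    (tot X).d (n + 1) n = (DD X n).d (cN X (n + 1)) ≫ G X n (cN X (n + 1)) := by
  simp [tot, ChainComplex.of_d]

/-- The map from the `k`-th filtration level into the total complex. -/
noncomputable def Fk (k : ℕ) : U X k ⟶ tot X where
  f n := G X n k
  comm' := by
    intro i j hij
    simp only [ComplexShape.down_Rel] at hij
    subst hij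
    rw [tot_d, U_d]
    exact G_d X j k

lemma Fk_f (k n : ℕ) : (Fk X k).f n = G X n k := rfl

lemma J_Fk (k : ℕ) : J X k ≫ Fk X (k + 1) = Fk X k := by
  ext n
  exact G_j X n k

lemma Fk_eqToHom {k k' : ℕ} (h : k = k') :
    eqToHom (congrArg (U X) h) ≫ Fk X k' = Fk X k := by subst h; simp

lemma EE_eqToHom {k k' : ℕ} (h : k = k') :
    eqToHom (congrArg (U X) h) ≫ EE X k' = EE X k ≫ eqToHom (congrArg (Wo X) h) := by
  subst h; simp

end Total

section Assemble

variable {A : Type u} [Category.{v} A] [Abelian A] [EnoughProjectives A]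
variable (X : FilteredComplex A)

/-- The filtration levels of the resolution, indexed by `ℤ`. -/
noncomputable abbrev Wfil (p : ℤ) : ChainComplex A ℕ := U X ((p - P0 X).toNat)

/-- The inclusions of the filtration of the resolution. -/
noncomputable def ιfil (p : ℤ) : Wfil X p ⟶ Wfil X (p + 1) :=
  if h : P0 X ≤ p then
    J X ((p - P0 X).toNat) ≫
      eqToHom (congrArg (U X) (show (p - P0 X).toNat + 1 = (p + 1 - P0 X).toNat by omega))
  else 0

/-- The maps from the filtration into the total complex. -/
noncomputable def toXfil (p : ℤ) : Wfil X p ⟶ tot X := Fk X ((p - P0 X).toNat)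

lemma isZero_Wfil (p : ℤ) (hp : p ≤ P0 X) : IsZero (Wfil X p) := by
  rw [Wfil, show (p - P0 X).toNat = 0 by omega]
  exact isZero_U0 X

/-- The resolution as a filtered complex. -/
noncomputable def PP : FilteredComplex A where
  X := tot X
  W := Wfil X
  ι := ιfil X
  mono_ι p := by
    rw [ιfil]
    split
    · haveI : Mono (J X ((p - P0 X).toNat)) :=
        HomologicalComplex.mono_of_mono_f _ (fun n => (TT X n).monoJ _)
      exact mono_comp _ _
    · exact mono_of_isZero_src _ (isZero_Wfil X p (by omega))
  toX := toXfil X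
  mono_toX p := HomologicalComplex.mono_of_mono_f _ (fun n => G_mono X n _)
  compat p := by
    by_cases h : P0 X ≤ p
    · rw [ιfil, dif_pos h, toXfil, toXfil, Category.assoc,
        Fk_eqToHom X (show (p - P0 X).toNat + 1 = (p + 1 - P0 X).toNat by omega), J_Fk]
    · exact (isZero_Wfil X p (by omega)).eq_of_src _ _
  bounded_below := ⟨P0 X, fun p hp n => by
    have : IsZero (Wfil X p) := isZero_Wfil X p hp
    exact (HomologicalComplex.eval A _ n).map_isZero this⟩
  biregular n := ⟨P0 X + cN X n, by
    have key : ∀ (t : ℕ) (_ : t = cN X n), IsIso ((Fk X t).f n) := by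
      intro t ht
      subst ht
      show IsIso (G X n (cN X n))
      rw [G_cN]
      infer_instance
    exact key _ (by omega)⟩

/-- The augmentation on total complexes. -/
noncomputable def epsf : tot X ⟶ X.X where
  f n := (TT X n).e (cN X n) ≫ (toXo X (cN X n)).f n
  comm' := by
    intro i j hij
    simp only [ComplexShape.down_Rel] at hij
    subst hij
    rw [tot_d]
    show ((TT X (j + 1)).e (cN X (j + 1)) ≫ (toXo X (cN X (j + 1))).f (j + 1)) ≫ X.X.d (j + 1) j =
      ((DD X j).d (cN X (j + 1)) ≫ G X j (cN X (j + 1))) ≫ (TT X j).e (cN X j) ≫ (toXo X (cN X j)).f j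
    rw [Category.assoc, Category.assoc, G_etoX X j (cN X (j + 1)),
      reassoc_of% ((DD X j).comm_de (cN X (j + 1))),
      (toXo X (cN X (j + 1))).comm (j + 1) j]

/-- The augmentation on the filtration levels, indexed by `ℤ`. -/
noncomputable def liftfil (p : ℤ) : Wfil X p ⟶ X.W p :=
  if h : P0 X ≤ p then
    EE X ((p - P0 X).toNat) ≫
      eqToHom (congrArg X.W (show P0 X + ((p - P0 X).toNat : ℤ) = p by omega))
  else 0

/-- The augmentation as a filtered morphism. -/
noncomputable def εfh : FilteredHom (PP X) X where
  f := epsf X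
  lift := liftfil X
  comm_toX p := by
    by_cases h : P0 X ≤ p
    · rw [liftfil, dif_pos h]
      show (EE X ((p - P0 X).toNat) ≫ eqToHom (congrArg X.W
        (show P0 X + ((p - P0 X).toNat : ℤ) = p by omega))) ≫ X.toX p = toXfil X p ≫ epsf X
      rw [Category.assoc, toX_eqToHom X (show P0 X + ((p - P0 X).toNat : ℤ) = p by omega)]
      ext n
      show (TT X n).e _ ≫ (toXo X _).f n = G X n _ ≫ ((TT X n).e (cN X n) ≫ (toXo X (cN X n)).f n)
      rw [G_etoX]
    · exact (isZero_Wfil X p (by omega)).eq_of_src _ _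
  comm_ι p := by
    by_cases h : P0 X ≤ p
    · have h1 : P0 X ≤ p + 1 := by omega
      rw [liftfil, dif_pos h, liftfil, dif_pos h1]
      show _ = ιfil X p ≫ _
      rw [ιfil, dif_pos h]
      have hgen : ∀ (k : ℕ) (hk : P0 X + (k : ℤ) = p) (k' : ℕ) (hk' : (k : ℤ) + 1 = (k' : ℤ))
          (eU : U X (k + 1) = U X k') (eW : X.W (P0 X + (k : ℤ)) = X.W p)
          (eW' : X.W (P0 X + (k' : ℤ)) = X.W (p + 1)),
          (EE X k ≫ eqToHom eW) ≫ X.ι p =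
            (J X k ≫ eqToHom eU) ≫ (EE X k' ≫ eqToHom eW') := by
        intro k hk k' hk' eU eW eW'
        have hkk : k' = k + 1 := by omega
        subst hkk
        subst hk
        simp only [eqToHom_refl, Category.comp_id, Category.id_comp]
        rw [← Category.assoc (J X k), J_EE, Category.assoc]
        simp [ιo, eqToHom_trans]
      exact hgen _ (by omega) _ (by omega) _ _ _
    · exact (isZero_Wfil X p (by omega)).eq_of_src _ _

end Assemble

section QuasiIsoProof

attribute [local instance] CategoryTheory.Abelian.Pseudoelement.objectToSort
  CategoryTheory.Abelian.Pseudoelement.homToFun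

variable {A : Type u} [Category.{v} A] [Abelian A] [EnoughProjectives A]
variable (X : FilteredComplex A)

lemma EE_quasi (k : ℕ) : QuasiIso (EE X k) := by
  have hca := fun {P Q R : A} (f : P ⟶ Q) (g : Q ⟶ R) (a : Pseudoelement P) =>
    Pseudoelement.comp_apply f g a
  apply quasiIso_of_pseudo_lift
  · exact TT0_epi X k
  · intro n c z hz hez
    -- lift `z` to the abstract cycles
    have hlift : ∃ zt : (TT X n).Z k, ((TT X n).iZ k) zt = z := by
      cases n with
      | zero =>
        haveI := TT0_isoZ X k
        exact pseudo_surjective_of_epi ((TT X 0).iZ k) z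
      | succ m =>
        rw [show (U X k).d (m + 1) (m + 1 - 1) = (DD X m).d k from U_d X k m] at hz
        exact pseudo_exact_of_exact
          (ShortComplex.exact_of_f_is_kernel
            (ShortComplex.mk ((TT X (m + 1)).iZ k) ((DD X m).d k) ((DD X m).iZd k))
            ((DD X m).isKer k)) z hz
    obtain ⟨zt, hzt⟩ := hlift
    haveI : Mono (WZι X n k) := by unfold WZι; infer_instance
    have hcond : (dtil X n k) c = ((TT X n).zeta k) zt := by
      apply pseudo_injective_of_mono (WZι X n k)
      rw [← hca, dtil_ι, ← hca, ← (TT X n).comm_zeta k, hca, hzt]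
      exact hez.symm
    obtain ⟨sel, hs1, hs2⟩ := pseudo_pullback hcond
    haveI := (DD X n).EA k
    obtain ⟨w, hw⟩ := pseudo_surjective_of_epi
      (pullback.lift ((TT X (n + 1)).e k) ((DD X n).dZ k) ((DD X n).cond k)) sel
    refine ⟨w, ?_, ?_⟩
    · show ((TT X (n + 1)).e k) w = c
      have : ((TT X (n + 1)).e k) w = (pullback.fst (dtil X n k) ((TT X n).zeta k)) sel := by
        rw [← hw, ← hca, pullback.lift_fst]
      rw [this, hs1]
    · show ((U X k).d (n + 1) n) w = z
      rw [U_d X k n, ← (DD X n).hdZ k]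
      have : ((DD X n).dZ k) w = (pullback.snd (dtil X n k) ((TT X n).zeta k)) sel := by
        rw [← hw, ← hca, pullback.lift_snd]
      refine (hca _ _ w).trans ?_
      rw [this, hs2]
      exact hzt

end QuasiIsoProof

section Final

variable {A : Type u} [Category.{v} A] [Abelian A] [EnoughProjectives A]
variable (X : FilteredComplex A)

lemma lift_quasi (p : ℤ) : QuasiIso (liftfil X p) := by
  rw [liftfil]
  split
  · haveI : QuasiIso (EE X ((p - P0 X).toNat)) := EE_quasi X _
    infer_instance
  · apply quasiIso_of_isZero
    · intro n
      exact (HomologicalComplex.eval A _ n).map_isZero (isZero_Wfil X p (by omega))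
    · intro n
      exact hP0 X p (by omega) n

lemma gr_projective (p : ℤ) (n : ℕ) : Projective ((PP X).gr p n) := by
  show Projective (cokernel ((ιfil X (p - 1)).f n))
  by_cases h : P0 X ≤ p - 1
  · have hg : (ιfil X (p - 1)).f n = (TT X n).j ((p - 1 - P0 X).toNat) ≫
        (eqToHom (congrArg (U X)
          (show (p - 1 - P0 X).toNat + 1 = (p - 1 + 1 - P0 X).toNat by omega))).f n := by
      rw [ιfil, dif_pos h]
      rfl
    rw [hg]
    haveI : IsIso ((eqToHom (congrArg (U X)
        (show (p - 1 - P0 X).toNat + 1 = (p - 1 + 1 - P0 X).toNat by omega)) :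
        U X _ ⟶ U X _).f n) := isIso_f_of_isIso _ n
    exact @projective_cokernel_comp_iso _ _ _ _ _ _ _ _ this ((TT X n).projCoker _)
  · have hg : (ιfil X (p - 1)).f n = 0 := by
      rw [ιfil, dif_neg h]
      rfl
    rw [hg]
    have hz : IsZero ((Wfil X (p - 1 + 1)).X n) :=
      (HomologicalComplex.eval A _ n).map_isZero (isZero_Wfil X (p - 1 + 1) (by omega))
    haveI : Epi (0 : (Wfil X (p - 1)).X n ⟶ (Wfil X (p - 1 + 1)).X n) :=
      epi_of_isZero_tgt _ hz
    exact projective_of_isZero (isZero_cokernel_of_epi _)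

end Final

end FPM

/-- If `A` is an abelian category with enough projectives, then every filtered
bounded-below chain complex `(X, W)` admits a filtered quasi-isomorphism `ε : P ⟶ X`
where `P` is a filtered complex all of whose graded pieces `Gr^W_p P` are projective in
every degree. -/
theorem filtered_projective_models [EnoughProjectives A]
    (X : FilteredComplex A) :
    ∃ (P : FilteredComplex A) (ε : FilteredHom P X),
      ε.IsFilteredQuasiIso ∧ ∀ (p : ℤ) (n : ℕ), Projective (P.gr p n) := by
  exact ⟨FPM.PP X, FPM.εfh X, fun p => FPM.lift_quasi X p, fun p n => FPM.gr_projective X p n⟩
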